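/- Let 𝒜^{ML} be the block matrix obtained from a symmetric block-tridiagonal matrix 𝒜 (with off-diagonal blocks A_0,…,A_{N−1} and zero diagonal blocks) by replacing the last block row with (G_0, G_1, …, G_N), and let 𝒮 = diag(I, …, I, H) with H symmetric positive definite. Then 𝒮𝒜^{ML} is symmetric if and only if G_j = 0 for 0 ≤ j ≤ N−2, H G_{N−1} = A_{N−1}, and H G_N = (H G_N)ᵀ. -/
import Mathlib


open Matrix

/-- Let `𝒜ᴹᴸ` be the `(N+1)×(N+1)`-block matrix (blocks of degree `l` having size `l+1`)
obtained from the symmetric block-tridiagonal `P_N` matrix `𝒜` (with off-diagonal blocks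
`𝒜_{l,l+1} = (1/2)A_lᵀ`, `𝒜_{l+1,l} = (1/2)A_l` and zero diagonal blocks) by replacing
its last block row with `(1/2)(G_0, …, G_N)`, and let `𝒮 = diag(I, …, I, H)` with `H`
symmetric positive definite. Then `𝒮 𝒜ᴹᴸ` is symmetric if and only if `G_j = 0` for
`0 ≤ j ≤ N−2`, `H G_{N−1} = A_{N−1}`, and `H G_N = (H G_N)ᵀ`. -/
theorem stmt_14 (N : ℕ) (hN : 1 ≤ N)
    (A : ∀ l : Fin N, Matrix (Fin (l.1 + 2)) (Fin (l.1 + 1)) ℝ)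
    (G : ∀ j : Fin (N + 1), Matrix (Fin (N + 1)) (Fin (j.1 + 1)) ℝ)
    (H : Matrix (Fin (N + 1)) (Fin (N + 1)) ℝ) (hH : H.PosDef)
    (AML S : Matrix ((l : Fin (N + 1)) × Fin (l.1 + 1))
      ((l : Fin (N + 1)) × Fin (l.1 + 1)) ℝ)
    (hAML : ∀ (i j : Fin (N + 1)) (a : Fin (i.1 + 1)) (b : Fin (j.1 + 1)),
      AML ⟨i, a⟩ ⟨j, b⟩ =
        if hiN : i.1 = N then
          (1 / 2 : ℝ) * G j (Fin.cast (by omega) a) b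
        else if hij : j.1 = i.1 + 1 then
          (1 / 2 : ℝ) * A ⟨i.1, by have := i.isLt; omega⟩ (Fin.cast (by simp only [Fin.val_mk]; omega) b) a
        else if hji : i.1 = j.1 + 1 then
          (1 / 2 : ℝ) * A ⟨j.1, by have := j.isLt; omega⟩ (Fin.cast (by simp only [Fin.val_mk]; omega) a) b
        else 0)
    (hS : ∀ (i j : Fin (N + 1)) (a : Fin (i.1 + 1)) (b : Fin (j.1 + 1)),
      S ⟨i, a⟩ ⟨j, b⟩ =
        if hij : i = j then
          if hiN : i.1 = N then
            H (Fin.cast (by omega) a) (Fin.cast (by rw [← hij]; omega) b)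
          else if (a : ℕ) = (b : ℕ) then 1 else 0
        else 0) :
    (S * AML).IsSymm ↔
      ((∀ j : Fin (N + 1), j.1 + 2 ≤ N → G j = 0) ∧
        H * G ⟨N - 1, by omega⟩ =
          (A ⟨N - 1, by omega⟩).submatrix (Fin.cast (by simp only [Fin.val_mk]; omega)) id ∧
        (H * G (Fin.last N)).IsSymm) := by
  classical
  have hHdet : IsUnit H.det := isUnit_iff_ne_zero.mpr (ne_of_gt hH.det_pos)
  have hent : ∀ (i j : Fin (N + 1)) (a : Fin (i.1 + 1)) (b : Fin (j.1 + 1)),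
      (S * AML) ⟨i, a⟩ ⟨j, b⟩ =
        if hiN : i.1 = N then (1 / 2 : ℝ) * (H * G j) (Fin.cast (by omega) a) b
        else AML ⟨i, a⟩ ⟨j, b⟩ := by
    intro i j a b
    rw [Matrix.mul_apply, ← Finset.univ_sigma_univ, Finset.sum_sigma]
    rw [Finset.sum_eq_single i]
    · by_cases hiN : i.1 = N
      · rw [dif_pos hiN]
        have hcast : i.1 + 1 = N + 1 := by omega
        rw [Matrix.mul_apply, Finset.mul_sum]
        refine Fintype.sum_equiv (finCongr hcast) _ _ fun c => ?_
        rw [hS, dif_pos rfl, dif_pos hiN, hAML, dif_pos hiN]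
        show H _ (Fin.cast hcast c) * ((1/2 : ℝ) * G j (Fin.cast hcast c) b) = _
        show _ = (1/2 : ℝ) * (H (Fin.cast hcast a) (finCongr hcast c) * G j (finCongr hcast c) b)
        rw [finCongr_apply]
        ring
      · rw [dif_neg hiN]
        rw [Finset.sum_eq_single a]
        · rw [hS, dif_pos rfl, dif_neg hiN, if_pos rfl, one_mul]
        · intro c _ hca
          rw [hS, dif_pos rfl, dif_neg hiN, if_neg (by simpa [Fin.val_eq_val] using hca.symm), zero_mul]
        · intro h; exact absurd (Finset.mem_univ a) h
    · intro k _ hki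
      refine Finset.sum_eq_zero fun c _ => ?_
      rw [hS, dif_neg (Ne.symm hki), zero_mul]
    · intro h; exact absurd (Finset.mem_univ i) h
  have hsymm : (S * AML).IsSymm ↔ ∀ (i j : Fin (N + 1)) (a : Fin (i.1 + 1)) (b : Fin (j.1 + 1)),
      (S * AML) ⟨j, b⟩ ⟨i, a⟩ = (S * AML) ⟨i, a⟩ ⟨j, b⟩ := by
    constructor
    · intro h i j a b; exact h.apply ⟨i, a⟩ ⟨j, b⟩
    · intro h
      rw [Matrix.IsSymm]
      ext ⟨i, a⟩ ⟨j, b⟩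
      rw [Matrix.transpose_apply]
      exact h i j a b
  rw [hsymm]
  constructor
  · intro h
    refine ⟨?_, ?_, ?_⟩
    · -- G j = 0 for j + 2 ≤ N
      intro j hj
      have hjN : ¬(j.1 = N) := by omega
      have hz : H * G j = 0 := by
        ext r c
        simp only [Matrix.zero_apply]
        have e := h (Fin.last N) j r c
        simp only [hent] at e
        rw [dif_neg hjN, dif_pos (Fin.val_last N)] at e
        rw [hAML, dif_neg hjN,
          dif_neg (show ¬((Fin.last N).1 = j.1 + 1) by rw [Fin.val_last]; omega),
          dif_neg (show ¬(j.1 = (Fin.last N).1 + 1) by rw [Fin.val_last]; have := j.isLt; omega)] at e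
        have e' : (0 : ℝ) = 1 / 2 * (H * G j) r c := e
        linarith
      calc G j = (H⁻¹ * H) * G j := by rw [Matrix.nonsing_inv_mul H hHdet, Matrix.one_mul]
        _ = H⁻¹ * (H * G j) := by rw [Matrix.mul_assoc]
        _ = 0 := by rw [hz, Matrix.mul_zero]
    · -- H * G_{N-1} = A_{N-1}
      ext r c
      rw [Matrix.submatrix_apply]
      have e := h (Fin.last N) ⟨N - 1, by omega⟩ r c
      simp only [hent] at e
      rw [dif_neg (show ¬((⟨N - 1, by omega⟩ : Fin (N + 1)).1 = N) by
            simp only [Fin.val_mk]; omega),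
        dif_pos (Fin.val_last N)] at e
      rw [hAML, dif_neg (show ¬((⟨N - 1, by omega⟩ : Fin (N + 1)).1 = N) by
            simp only [Fin.val_mk]; omega),
        dif_pos (show (Fin.last N).1 = (⟨N - 1, by omega⟩ : Fin (N + 1)).1 + 1 by
            rw [Fin.val_last]; simp only [Fin.val_mk]; omega)] at e
      have e' : (1 / 2 : ℝ) * A ⟨N - 1, by omega⟩ (Fin.cast (by simp only [Fin.val_mk]; omega) r) c
          = 1 / 2 * (H * G ⟨N - 1, by omega⟩) r c := e
      have := mul_left_cancel₀ (show (1/2 : ℝ) ≠ 0 by norm_num) e'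
      exact this.symm
    · -- H * G_N symmetric
      rw [Matrix.IsSymm]
      ext r c
      rw [Matrix.transpose_apply]
      have e := h (Fin.last N) (Fin.last N) c r
      simp only [hent] at e
      rw [dif_pos (Fin.val_last N), dif_pos (Fin.val_last N)] at e
      have e' : (1 / 2 : ℝ) * (H * G (Fin.last N)) r c
          = 1 / 2 * (H * G (Fin.last N)) c r := e
      exact (mul_left_cancel₀ (show (1/2 : ℝ) ≠ 0 by norm_num) e').symm
  · rintro ⟨h0, h1, h2⟩ i j a b
    rw [hent, hent]
    by_cases hiN : i.1 = N <;> by_cases hjN : j.1 = N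
    · -- both = N
      rw [dif_pos hiN, dif_pos hjN]
      have hi : i = Fin.last N := Fin.ext (by rw [Fin.val_last]; exact hiN)
      have hj : j = Fin.last N := Fin.ext (by rw [Fin.val_last]; exact hjN)
      subst hi; subst hj
      exact congrArg (fun x => (1 / 2 : ℝ) * x) (h2.apply a b)
    · -- i = N, j ≠ N : row ⟨j,b⟩ col ⟨i,a⟩ is AML
      rw [dif_pos hiN, dif_neg hjN, hAML, dif_neg hjN]
      by_cases hij : i.1 = j.1 + 1
      · rw [dif_pos hij]
        have hj : j = ⟨N - 1, Nat.lt_succ_of_le (Nat.sub_le N 1)⟩ := Fin.ext (by simp only [Fin.val_mk]; omega)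
        subst hj
        have key : (H * G ⟨N - 1, by omega⟩) (Fin.cast (by omega) a) b
            = A ⟨N - 1, by omega⟩ (Fin.cast (by simp only [Fin.val_mk]; omega) a) b := by
          have := congrFun (congrFun h1 (Fin.cast (by omega) a)) b
          rw [Matrix.submatrix_apply] at this
          exact this
        exact (congrArg (fun x => (1 / 2 : ℝ) * x) key).symm
      · rw [dif_neg hij, dif_neg (show ¬(j.1 = i.1 + 1) by omega)]
        have hz : G j = 0 := h0 j (by have := j.isLt; omega)
        rw [hz, Matrix.mul_zero]
        simp
    · -- i ≠ N, j = N
      rw [dif_neg hiN, dif_pos hjN, hAML, dif_neg hiN]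
      by_cases hji : j.1 = i.1 + 1
      · rw [dif_pos hji]
        have hi : i = ⟨N - 1, Nat.lt_succ_of_le (Nat.sub_le N 1)⟩ := Fin.ext (by simp only [Fin.val_mk]; omega)
        subst hi
        have key : (H * G ⟨N - 1, by omega⟩) (Fin.cast (by omega) b) a
            = A ⟨N - 1, by omega⟩ (Fin.cast (by simp only [Fin.val_mk]; omega) b) a := by
          have := congrFun (congrFun h1 (Fin.cast (by omega) b)) a
          rw [Matrix.submatrix_apply] at this
          exact this
        exact congrArg (fun x => (1 / 2 : ℝ) * x) key
      · rw [dif_neg hji, dif_neg (show ¬(i.1 = j.1 + 1) by omega)]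
        have hz : G i = 0 := h0 i (by have := i.isLt; omega)
        rw [hz, Matrix.mul_zero]
        simp
    · -- both ≠ N
      rw [dif_neg hiN, dif_neg hjN, hAML, hAML, dif_neg hjN, dif_neg hiN]
      by_cases hij : i.1 = j.1 + 1
      · rw [dif_pos hij, dif_neg (show ¬(j.1 = i.1 + 1) by omega), dif_pos hij]
      · by_cases hji : j.1 = i.1 + 1
        · rw [dif_neg hij, dif_pos hji, dif_pos hji]
        · rw [dif_neg hij, dif_neg hji, dif_neg hji, dif_neg hij]
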